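/- For μ = (μ_1, μ_2, μ_3), the Gauss decomposition blocks satisfy [E_{1;i,j}(u), F_{2;h,k}(v)] = 0 in Y_{(μ_1,μ_2,μ_3)}((u^{-1},v^{-1})), for all 1 ≤ i ≤ μ_1, 1 ≤ j,k ≤ μ_2, 1 ≤ h ≤ μ_3. -/

import Mathlib

noncomputable section

namespace SuperYangian
set_option linter.unusedSectionVars false
set_option maxHeartbeats 1000000

/-- The sign `(-1)^x` for `x : ZMod 2`. -/
def sgn (x : ZMod 2) : ℂ := if x = 0 then 1 else -1

variable {A : Type*}

/-- The supercommutator `[x, y] = x*y - ε • (y*x)` with prescribed sign `ε`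
(for homogeneous `x`, `y` one takes `ε = (-1)^{|x||y|}`). -/
def scomm [Ring A] [Algebra ℂ A] (ε : ℂ) (x y : A) : A := x * y - ε • (y * x)

/-- `off μ a = μ 0 + ⋯ + μ (a-1)`. -/
def off (μ : ℕ → ℕ) (a : ℕ) : ℕ := ∑ b ∈ Finset.range a, μ b

/-- A family `t i j r` (the coefficient of `u^{-r}` in `t_{ij}(u)`, with 0-based
indices `i j < d`) satisfying the defining RTT relations of the super Yangian
`Y(gl_{M|N})` with parity sequence `p`; the super Yangian itself, via
`t_{i+1,j+1}^{(r)} = t i j r`, is the universal such family. -/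
structure RTT (A : Type*) [Ring A] [Algebra ℂ A] (d : ℕ) (p : ℕ → ZMod 2) where
  t : ℕ → ℕ → ℕ → A
  t_zero : ∀ i j, t i j 0 = if i = j then (1 : A) else 0
  rtt : ∀ i j h k r s : ℕ, i < d → j < d → h < d → k < d →
    scomm (sgn ((p i + p j) * (p h + p k))) (t i j r) (t h k s) =
      sgn (p i * p j + p i * p h + p j * p h) •
        ∑ g ∈ Finset.range (min r s),
          (t h j g * t i k (r + s - 1 - g) - t h j (r + s - 1 - g) * t i k g)

/-- Gauss decomposition data `T(u) = F(u) D(u) E(u)` with respect to the composition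
`μ = (μ 0, …, μ (n-1))`, in coefficient form.  `E a b i j r` is the coefficient of
`u^{-r}` in the `(i,j)`-entry of the block `E_{a,b}(u)` (0-based blocks and entries),
extended by the identity on the diagonal blocks and by `0` below them; similarly `F`.
`D a` are the diagonal blocks and `D' a` their inverses.  Since the Gauss
decomposition is unique, this data consists exactly of the quasideterminant blocks. -/
structure Gauss [Ring A] [Algebra ℂ A] (T : ℕ → ℕ → ℕ → A) (n : ℕ) (μ : ℕ → ℕ) where
  D : ℕ → ℕ → ℕ → ℕ → A
  D' : ℕ → ℕ → ℕ → ℕ → A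
  E : ℕ → ℕ → ℕ → ℕ → ℕ → A
  F : ℕ → ℕ → ℕ → ℕ → ℕ → A
  E_diag : ∀ a i j r, E a a i j r = if i = j ∧ r = 0 then 1 else 0
  E_low : ∀ a b i j r, b < a → E a b i j r = 0
  E_zero : ∀ a b i j, a < b → E a b i j 0 = 0
  F_diag : ∀ a i j r, F a a i j r = if i = j ∧ r = 0 then 1 else 0
  F_high : ∀ a b i j r, a < b → F a b i j r = 0
  F_zero : ∀ a b i j, b < a → F a b i j 0 = 0
  D_zero : ∀ a i j, D a i j 0 = if i = j then (1 : A) else 0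
  D_inv : ∀ a i j r, a < n → i < μ a → j < μ a →
    ∑ q ∈ Finset.range (μ a), ∑ e ∈ Finset.range (r + 1), D a i q e * D' a q j (r - e) =
      if i = j ∧ r = 0 then 1 else 0
  D_inv' : ∀ a i j r, a < n → i < μ a → j < μ a →
    ∑ q ∈ Finset.range (μ a), ∑ e ∈ Finset.range (r + 1), D' a i q e * D a q j (r - e) =
      if i = j ∧ r = 0 then 1 else 0
  decomp : ∀ a b i j r, a < n → b < n → i < μ a → j < μ b →
    T (off μ a + i) (off μ b + j) r =
      ∑ c ∈ Finset.range n, ∑ q1 ∈ Finset.range (μ c), ∑ q2 ∈ Finset.range (μ c),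
        ∑ e1 ∈ Finset.range (r + 1), ∑ e2 ∈ Finset.range (r + 1 - e1),
          F a c i q1 e1 * D c q1 q2 e2 * E c b q2 j (r - e1 - e2)


section Infra

lemma zmod2_cases (a : ZMod 2) : a = 0 ∨ a = 1 := by revert a; decide

@[simp] lemma sgn_zero : sgn 0 = 1 := rfl

lemma sgn_mul_sgn (a b : ZMod 2) : sgn a * sgn b = sgn (a + b) := by
  rcases zmod2_cases a with h | h <;> rcases zmod2_cases b with h' | h' <;>
    subst h <;> subst h' <;>
      simp [sgn, show (1+1 : ZMod 2) = 0 from rfl, show (1 : ZMod 2) ≠ 0 from by decide]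

lemma sgn_sq (a : ZMod 2) : sgn a * sgn a = 1 := by
  rw [sgn_mul_sgn]
  rcases zmod2_cases a with h | h <;> subst h <;>
    simp [sgn, show (1+1 : ZMod 2) = 0 from rfl]

lemma sgn_smul_cancel {B : Type*} [Ring B] [Algebra ℂ B] (a : ZMod 2) {x : B}
    (h : sgn a • x = 0) : x = 0 := by
  have := congrArg (fun y => sgn a • y) h
  simpa [smul_smul, sgn_sq] using this

variable {B : Type*} [Ring B] [Algebra ℂ B]

@[simp] lemma scomm_zero_left (ε : ℂ) (y : B) : scomm ε 0 y = 0 := by simp [scomm]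
@[simp] lemma scomm_zero_right (ε : ℂ) (x : B) : scomm ε x 0 = 0 := by simp [scomm]

lemma scomm_one_one_left (y : B) : scomm 1 1 y = 0 := by simp [scomm]

lemma scomm_smul_right (ε c : ℂ) (x y : B) : scomm ε x (c • y) = c • scomm ε x y := by
  simp [scomm, smul_sub, mul_smul_comm, smul_mul_assoc, smul_smul, mul_comm]

lemma scomm_smul_left (ε c : ℂ) (x y : B) : scomm ε (c • x) y = c • scomm ε x y := by
  simp [scomm, smul_sub, mul_smul_comm, smul_mul_assoc, smul_smul, mul_comm]

lemma scomm_add_right (ε : ℂ) (x y z : B) : scomm ε x (y + z) = scomm ε x y + scomm ε x z := by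
  simp [scomm, mul_add, add_mul, smul_add]; abel

lemma scomm_sub_right (ε : ℂ) (x y z : B) : scomm ε x (y - z) = scomm ε x y - scomm ε x z := by
  simp [scomm, mul_sub, sub_mul, smul_sub]; abel

lemma scomm_sum_right {ι : Type*} (ε : ℂ) (x : B) (s : Finset ι) (g : ι → B) :
    scomm ε x (∑ i ∈ s, g i) = ∑ i ∈ s, scomm ε x (g i) := by
  classical
  induction s using Finset.induction_on with
  | empty => simp
  | insert _ _ h ih => rw [Finset.sum_insert h, Finset.sum_insert h, scomm_add_right, ih]

lemma scomm_sum_left {ι : Type*} (ε : ℂ) (y : B) (s : Finset ι) (g : ι → B) :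
    scomm ε (∑ i ∈ s, g i) y = ∑ i ∈ s, scomm ε (g i) y := by
  simp [scomm, Finset.sum_mul, Finset.mul_sum, Finset.smul_sum, Finset.sum_sub_distrib]

lemma scomm_mul_right (ε₁ ε₂ : ℂ) (x y z : B) :
    scomm (ε₁ * ε₂) x (y * z) = scomm ε₁ x y * z + ε₁ • (y * scomm ε₂ x z) := by
  simp only [scomm, mul_sub, sub_mul, smul_sub, smul_smul, mul_assoc,
    smul_mul_assoc, mul_smul_comm]
  abel

lemma scomm_mul_left (ε₁ ε₂ : ℂ) (x y z : B) :
    scomm (ε₁ * ε₂) (x * y) z = x * scomm ε₂ y z + ε₂ • (scomm ε₁ x z * y) := by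
  simp only [scomm, mul_sub, sub_mul, smul_sub, smul_smul, mul_assoc,
    smul_mul_assoc, mul_smul_comm]
  rw [mul_comm ε₁ ε₂]
  abel

end Infra

section Series

open PowerSeries

variable [Ring A] [Algebra ℂ A]

/-- one-variable series from a coefficient family -/
abbrev sr (c : ℕ → A) : PowerSeries A := PowerSeries.mk c

/-- embed a family as a series in the inner variable `X` (constant in outer `Y`) -/
def px (c : ℕ → A) : PowerSeries (PowerSeries A) := PowerSeries.C (sr c)

/-- embed a family as a series in the outer variable `Y` (constant coefficients) -/
def py (c : ℕ → A) : PowerSeries (PowerSeries A) := PowerSeries.map (PowerSeries.C) (sr c)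

def XX : PowerSeries (PowerSeries A) := PowerSeries.C PowerSeries.X
def YY : PowerSeries (PowerSeries A) := PowerSeries.X

/-- extraction of the `u^{-r} v^{-s}` coefficient -/
def cf (r s : ℕ) (P : PowerSeries (PowerSeries A)) : A :=
  PowerSeries.coeff r (PowerSeries.coeff s P)

lemma cf_add (r s : ℕ) (P Q : PowerSeries (PowerSeries A)) :
    cf r s (P + Q) = cf r s P + cf r s Q := by simp [cf]

lemma cf_sub (r s : ℕ) (P Q : PowerSeries (PowerSeries A)) :
    cf r s (P - Q) = cf r s P - cf r s Q := by simp [cf]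

lemma cf_smul (r s : ℕ) (c : ℂ) (P : PowerSeries (PowerSeries A)) :
    cf r s (c • P) = c • cf r s P := by simp [cf]

lemma cf_zero (r s : ℕ) : cf r s (0 : PowerSeries (PowerSeries A)) = 0 := by simp [cf]

lemma cf_px_mul_py (r s : ℕ) (c c' : ℕ → A) :
    cf r s (px c * py c') = c r * c' s := by
  simp [cf, px, py, PowerSeries.coeff_C_mul, PowerSeries.coeff_map,
    PowerSeries.coeff_mul_C, PowerSeries.coeff_mk]

lemma cf_py_mul_px (r s : ℕ) (c c' : ℕ → A) :
    cf r s (py c' * px c) = c' s * c r := by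
  simp [cf, px, py, PowerSeries.coeff_mul_C, PowerSeries.coeff_map,
    PowerSeries.coeff_C_mul, PowerSeries.coeff_mk]

lemma cf_scomm_px_py (ε : ℂ) (r s : ℕ) (c c' : ℕ → A) :
    cf r s (scomm ε (px c) (py c')) = scomm ε (c r) (c' s) := by
  rw [scomm, cf_sub, cf_smul, cf_px_mul_py, cf_py_mul_px, scomm]

lemma cf_XX_mul (r s : ℕ) (P : PowerSeries (PowerSeries A)) :
    cf (r + 1) s (XX * P) = cf r s P := by
  simp [cf, XX, PowerSeries.coeff_C_mul, PowerSeries.coeff_succ_X_mul]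

lemma cf_XX_mul_zero (s : ℕ) (P : PowerSeries (PowerSeries A)) :
    cf 0 s (XX * P) = 0 := by
  simp [cf, XX, PowerSeries.coeff_C_mul, PowerSeries.coeff_zero_X_mul]

lemma cf_YY_mul (r s : ℕ) (P : PowerSeries (PowerSeries A)) :
    cf r (s + 1) (YY * P) = cf r s P := by
  simp [cf, YY, PowerSeries.coeff_succ_X_mul]

lemma cf_YY_mul_zero (r : ℕ) (P : PowerSeries (PowerSeries A)) :
    cf r 0 (YY * P) = 0 := by
  simp [cf, YY, PowerSeries.coeff_zero_X_mul]

lemma X_mul_cancel {R : Type*} [Ring R] {φ : PowerSeries R}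
    (h : PowerSeries.X * φ = 0) : φ = 0 := by
  ext n
  have := congrArg (PowerSeries.coeff (n + 1)) h
  simpa [PowerSeries.coeff_succ_X_mul] using this

lemma YX_cancel {M : PowerSeries (PowerSeries A)} (h : (YY - XX) * M = 0) : M = 0 := by
  ext s : 1
  induction s with
  | zero =>
    have h0 := congrArg (PowerSeries.coeff 0) h
    simp only [sub_mul, map_sub, YY, XX, PowerSeries.coeff_zero_X_mul,
      PowerSeries.coeff_C_mul, map_zero, zero_sub, neg_eq_zero] at h0
    simpa using X_mul_cancel h0
  | succ n ih =>
    have h0 := congrArg (PowerSeries.coeff (n + 1)) h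
    simp only [sub_mul, map_sub, YY, XX, PowerSeries.coeff_succ_X_mul,
      PowerSeries.coeff_C_mul, map_zero, ih, zero_sub, neg_eq_zero] at h0
    simpa using X_mul_cancel h0

lemma XX_comm (P : PowerSeries (PowerSeries A)) : XX * P = P * XX := by
  ext s : 1
  rw [XX, PowerSeries.coeff_C_mul, PowerSeries.coeff_mul_C]
  exact (PowerSeries.commute_X _).symm.eq

lemma YY_comm (P : PowerSeries (PowerSeries A)) : YY * P = P * YY := by
  exact (PowerSeries.commute_X P).symm.eq

lemma coeff_mk_mul_mk (r : ℕ) (x y : ℕ → A) :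
    PowerSeries.coeff r (sr x * sr y) = ∑ e ∈ Finset.range (r + 1), x e * y (r - e) := by
  rw [PowerSeries.coeff_mul, Finset.Nat.sum_antidiagonal_eq_sum_range_succ_mk]
  simp [PowerSeries.coeff_mk]

lemma sr_mul (x y : ℕ → A) :
    sr x * sr y = sr (fun r => ∑ e ∈ Finset.range (r + 1), x e * y (r - e)) := by
  ext r
  rw [coeff_mk_mul_mk]; simp [PowerSeries.coeff_mk]

lemma coeff_mk_mul_mk_mul_mk (r : ℕ) (x y z : ℕ → A) :
    PowerSeries.coeff r (sr x * (sr y * sr z)) =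
      ∑ e1 ∈ Finset.range (r + 1), ∑ e2 ∈ Finset.range (r + 1 - e1),
        x e1 * y e2 * z (r - e1 - e2) := by
  rw [sr_mul y z, coeff_mk_mul_mk]
  refine Finset.sum_congr rfl (fun e1 he1 => ?_)
  rw [Finset.mul_sum]
  have h1 : r - e1 + 1 = r + 1 - e1 := by
    have := Finset.mem_range.mp he1; omega
  rw [h1]
  exact Finset.sum_congr rfl (fun e2 _ => (mul_assoc _ _ _).symm)

lemma coeff_mk_mul_mk_mul_mk' (r : ℕ) (x y z : ℕ → A) :
    PowerSeries.coeff r (sr x * (sr y * sr z)) =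
      ∑ e1 ∈ Finset.range (r + 1), ∑ e2 ∈ Finset.range (r + 1 - e1),
        x e1 * (y e2 * z (r - e1 - e2)) := by
  rw [coeff_mk_mul_mk_mul_mk]
  exact Finset.sum_congr rfl fun e1 _ => Finset.sum_congr rfl fun e2 _ => mul_assoc _ _ _

end Series


section Blocks

open Finset

variable [Ring A] [Algebra ℂ A]

lemma sum4_delta_left (m r : ℕ) {i : ℕ} (hi : i < m) (g : ℕ → ℕ → ℕ → ℕ → A) :
    (∑ q1 ∈ range m, ∑ q2 ∈ range m, ∑ e1 ∈ range (r+1), ∑ e2 ∈ range (r+1-e1),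
      (if i = q1 ∧ e1 = 0 then (1:A) else 0) * g q1 q2 e1 e2)
    = ∑ q2 ∈ range m, ∑ e2 ∈ range (r+1), g i q2 0 e2 := by
  rw [Finset.sum_eq_single_of_mem i (mem_range.2 hi)]
  · refine Finset.sum_congr rfl (fun q2 _ => ?_)
    rw [Finset.sum_eq_single_of_mem 0 (mem_range.2 (Nat.succ_pos r))]
    · simp
    · intro e1 _ hne; simp [hne]
  · intro q1 _ hne
    have : i ≠ q1 := fun h => hne h.symm
    simp [this]

lemma sum2_delta_right (m R : ℕ) {j : ℕ} (hj : j < m) (g : ℕ → ℕ → A) :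
    (∑ q ∈ range m, ∑ e ∈ range (R+1), g q e * (if q = j ∧ R - e = 0 then (1:A) else 0))
    = g j R := by
  rw [Finset.sum_eq_single_of_mem j (mem_range.2 hj)]
  · rw [Finset.sum_eq_single_of_mem R (mem_range.2 (Nat.lt_succ_self R))]
    · simp
    · intro e he hne
      have : R - e ≠ 0 := by have := mem_range.mp he; omega
      simp [this]
  · intro q _ hne; simp [hne]

lemma sum4_delta_right (m r : ℕ) {j : ℕ} (hj : j < m) (g : ℕ → ℕ → ℕ → ℕ → A) :
    (∑ q1 ∈ range m, ∑ q2 ∈ range m, ∑ e1 ∈ range (r+1), ∑ e2 ∈ range (r+1-e1),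
      g q1 q2 e1 e2 * (if q2 = j ∧ r - e1 - e2 = 0 then (1:A) else 0))
    = ∑ q1 ∈ range m, ∑ e1 ∈ range (r+1), g q1 j e1 (r - e1) := by
  refine Finset.sum_congr rfl (fun q1 _ => ?_)
  rw [Finset.sum_eq_single_of_mem j (mem_range.2 hj)]
  · refine Finset.sum_congr rfl (fun e1 he1 => ?_)
    have he1' : e1 ≤ r := by have := mem_range.mp he1; omega
    rw [Finset.sum_eq_single_of_mem (r - e1) (mem_range.2 (by omega))]
    · simp [Nat.sub_self]
    · intro e2 he2 hne
      have : r - e1 - e2 ≠ 0 := by have := mem_range.mp he2; omega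
      simp [this]
  · intro q2 _ hne; simp [hne]

lemma off_zero (μ : ℕ → ℕ) : off μ 0 = 0 := by simp [off]
lemma off_one (μ : ℕ → ℕ) : off μ 1 = μ 0 := by simp [off]
lemma off_two (μ : ℕ → ℕ) : off μ 2 = μ 0 + μ 1 := by
  simp [off, Finset.sum_range_succ]
lemma off_three (μ : ℕ → ℕ) : off μ 3 = μ 0 + μ 1 + μ 2 := by
  simp [off, Finset.sum_range_succ]

variable {d : ℕ} {pr : ℕ → ZMod 2} {μ : ℕ → ℕ} (S : RTT A d pr) (G : Gauss S.t 3 μ)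

lemma sr_delta (P : Prop) [Decidable P] :
    sr (fun r => if P ∧ r = 0 then (1:A) else 0) = if P then 1 else 0 := by
  ext n
  by_cases h : P <;> by_cases hn : n = 0 <;>
    simp [h, hn, PowerSeries.coeff_mk, PowerSeries.coeff_one, PowerSeries.coeff_zero_one]

lemma blk11 {i q : ℕ} (hi : i < μ 0) (hq : q < μ 0) :
    sr (S.t i q) = sr (G.D 0 i q) := by
  ext r
  have hdec := G.decomp 0 0 i q r (by norm_num) (by norm_num) hi hq
  rw [off_zero, zero_add, zero_add] at hdec
  rw [Finset.sum_range_succ, Finset.sum_range_succ, Finset.sum_range_one] at hdec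
  simp only [G.F_high 0 1 _ _ _ (by norm_num), G.F_high 0 2 _ _ _ (by norm_num),
    zero_mul, Finset.sum_const_zero, add_zero] at hdec
  simp only [G.F_diag, G.E_diag, mul_assoc] at hdec
  rw [sum4_delta_left (μ 0) r hi] at hdec
  simp only [Nat.sub_zero] at hdec
  rw [sum2_delta_right (μ 0) r hq] at hdec
  simpa [PowerSeries.coeff_mk] using hdec

lemma blk12 {i k : ℕ} (hi : i < μ 0) (hk : k < μ 1) :
    sr (S.t i (μ 0 + k)) =
      ∑ q ∈ range (μ 0), sr (G.D 0 i q) * sr (G.E 0 1 q k) := by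
  ext r
  have hdec := G.decomp 0 1 i k r (by norm_num) (by norm_num) hi hk
  rw [off_zero, off_one, zero_add] at hdec
  rw [Finset.sum_range_succ, Finset.sum_range_succ, Finset.sum_range_one] at hdec
  simp only [G.F_high 0 1 _ _ _ (by norm_num), G.F_high 0 2 _ _ _ (by norm_num),
    zero_mul, Finset.sum_const_zero, add_zero] at hdec
  simp only [G.F_diag, mul_assoc] at hdec
  rw [sum4_delta_left (μ 0) r hi] at hdec
  simp only [Nat.sub_zero] at hdec
  rw [PowerSeries.coeff_mk, hdec, map_sum]
  exact (Finset.sum_congr rfl (fun q _ => (coeff_mk_mul_mk r _ _))).symm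

lemma blk21 {l q : ℕ} (hl : l < μ 1) (hq : q < μ 0) :
    sr (S.t (μ 0 + l) q) =
      ∑ q' ∈ range (μ 0), sr (G.F 1 0 l q') * sr (G.D 0 q' q) := by
  ext r
  have hdec := G.decomp 1 0 l q r (by norm_num) (by norm_num) hl hq
  rw [off_zero, off_one, zero_add] at hdec
  rw [Finset.sum_range_succ, Finset.sum_range_succ, Finset.sum_range_one] at hdec
  simp only [G.E_low 1 0 _ _ _ (by norm_num), G.E_low 2 0 _ _ _ (by norm_num),
    mul_zero, Finset.sum_const_zero, add_zero] at hdec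
  simp only [G.E_diag] at hdec
  rw [sum4_delta_right (μ 0) r hq] at hdec
  rw [PowerSeries.coeff_mk, hdec, map_sum]
  exact (Finset.sum_congr rfl (fun q' _ => (coeff_mk_mul_mk r _ _))).symm

lemma blk31 {h q : ℕ} (hh : h < μ 2) (hq : q < μ 0) :
    sr (S.t (μ 0 + μ 1 + h) q) =
      ∑ q' ∈ range (μ 0), sr (G.F 2 0 h q') * sr (G.D 0 q' q) := by
  ext r
  have hdec := G.decomp 2 0 h q r (by norm_num) (by norm_num) hh hq
  rw [off_zero, off_two, zero_add] at hdec
  rw [Finset.sum_range_succ, Finset.sum_range_succ, Finset.sum_range_one] at hdec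
  simp only [G.E_low 1 0 _ _ _ (by norm_num), G.E_low 2 0 _ _ _ (by norm_num),
    mul_zero, Finset.sum_const_zero, add_zero] at hdec
  simp only [G.E_diag] at hdec
  rw [sum4_delta_right (μ 0) r hq] at hdec
  rw [PowerSeries.coeff_mk, hdec, map_sum]
  exact (Finset.sum_congr rfl (fun q' _ => (coeff_mk_mul_mk r _ _))).symm

lemma blk22 {l k : ℕ} (hl : l < μ 1) (hk : k < μ 1) :
    sr (S.t (μ 0 + l) (μ 0 + k)) =
      (∑ q' ∈ range (μ 0), ∑ q ∈ range (μ 0),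
        sr (G.F 1 0 l q') * (sr (G.D 0 q' q) * sr (G.E 0 1 q k))) + sr (G.D 1 l k) := by
  ext r
  have hdec := G.decomp 1 1 l k r (by norm_num) (by norm_num) hl hk
  rw [off_one] at hdec
  rw [Finset.sum_range_succ, Finset.sum_range_succ, Finset.sum_range_one] at hdec
  simp only [G.F_high 1 2 _ _ _ (by norm_num), zero_mul, Finset.sum_const_zero,
    add_zero] at hdec
  simp only [G.F_diag, G.E_diag, mul_assoc] at hdec
  rw [sum4_delta_left (μ 1) r hl] at hdec
  simp only [Nat.sub_zero] at hdec
  rw [sum2_delta_right (μ 1) r hk] at hdec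
  rw [PowerSeries.coeff_mk, hdec, map_add, PowerSeries.coeff_mk, map_sum]
  congr 1
  refine Finset.sum_congr rfl fun q' _ => ?_
  rw [map_sum]
  exact Finset.sum_congr rfl fun q _ => (coeff_mk_mul_mk_mul_mk' r _ _ _).symm

lemma blk32 {h k : ℕ} (hh : h < μ 2) (hk : k < μ 1) :
    sr (S.t (μ 0 + μ 1 + h) (μ 0 + k)) =
      (∑ q' ∈ range (μ 0), ∑ q ∈ range (μ 0),
        sr (G.F 2 0 h q') * (sr (G.D 0 q' q) * sr (G.E 0 1 q k))) +
      ∑ l ∈ range (μ 1), sr (G.F 2 1 h l) * sr (G.D 1 l k) := by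
  ext r
  have hdec := G.decomp 2 1 h k r (by norm_num) (by norm_num) hh hk
  rw [off_one, off_two] at hdec
  rw [Finset.sum_range_succ, Finset.sum_range_succ, Finset.sum_range_one] at hdec
  simp only [G.E_low 2 1 _ _ _ (by norm_num), mul_zero, Finset.sum_const_zero,
    add_zero] at hdec
  simp only [G.E_diag] at hdec
  rw [sum4_delta_right (μ 1) r hk] at hdec
  rw [PowerSeries.coeff_mk, hdec, map_add, map_sum, map_sum]
  congr 1
  · refine Finset.sum_congr rfl fun q' _ => ?_
    rw [map_sum]
    refine Finset.sum_congr rfl fun q _ => ?_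
    rw [coeff_mk_mul_mk_mul_mk']
    exact Finset.sum_congr rfl fun e1 _ => Finset.sum_congr rfl fun e2 _ =>
      mul_assoc _ _ _
  · exact Finset.sum_congr rfl fun l _ => (coeff_mk_mul_mk r _ _).symm

/-- `G_{x,k}(v) := t_{x, μ0+k}(v) - ∑_q t_{x,q}(v) e_{q,k}(v)`. -/
def Gser (x k : ℕ) : PowerSeries A :=
  sr (S.t x (μ 0 + k)) - ∑ q ∈ range (μ 0), sr (S.t x q) * sr (G.E 0 1 q k)

lemma Gser_b {l k : ℕ} (hl : l < μ 1) (hk : k < μ 1) :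
    Gser S G (μ 0 + l) k = sr (G.D 1 l k) := by
  rw [Gser, blk22 S G hl hk]
  have h1 : ∀ q ∈ range (μ 0), sr (S.t (μ 0 + l) q) * sr (G.E 0 1 q k) =
      ∑ q' ∈ range (μ 0), sr (G.F 1 0 l q') * (sr (G.D 0 q' q) * sr (G.E 0 1 q k)) := by
    intro q hq
    rw [blk21 S G hl (Finset.mem_range.mp hq), Finset.sum_mul]
    exact Finset.sum_congr rfl fun q' _ => mul_assoc _ _ _
  have h2 : ∑ q ∈ range (μ 0), sr (S.t (μ 0 + l) q) * sr (G.E 0 1 q k)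
      = ∑ q' ∈ range (μ 0), ∑ q ∈ range (μ 0),
          sr (G.F 1 0 l q') * (sr (G.D 0 q' q) * sr (G.E 0 1 q k)) := by
    rw [Finset.sum_congr rfl h1]; exact Finset.sum_comm
  rw [h2, add_sub_cancel_left]

lemma Gser_fb {h k : ℕ} (hh : h < μ 2) (hk : k < μ 1) :
    Gser S G (μ 0 + μ 1 + h) k = ∑ l ∈ range (μ 1), sr (G.F 2 1 h l) * sr (G.D 1 l k) := by
  rw [Gser, blk32 S G hh hk]
  have h1 : ∀ q ∈ range (μ 0), sr (S.t (μ 0 + μ 1 + h) q) * sr (G.E 0 1 q k) =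
      ∑ q' ∈ range (μ 0), sr (G.F 2 0 h q') * (sr (G.D 0 q' q) * sr (G.E 0 1 q k)) := by
    intro q hq
    rw [blk31 S G hh (Finset.mem_range.mp hq), Finset.sum_mul]
    exact Finset.sum_congr rfl fun q' _ => mul_assoc _ _ _
  have h2 : ∑ q ∈ range (μ 0), sr (S.t (μ 0 + μ 1 + h) q) * sr (G.E 0 1 q k)
      = ∑ q' ∈ range (μ 0), ∑ q ∈ range (μ 0),
          sr (G.F 2 0 h q') * (sr (G.D 0 q' q) * sr (G.E 0 1 q k)) := by
    rw [Finset.sum_congr rfl h1]; exact Finset.sum_comm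
  rw [h2, add_sub_cancel_left]

lemma DInv_ser (a : ℕ) (ha : a < 3) {i j : ℕ} (hi : i < μ a) (hj : j < μ a) :
    ∑ q ∈ range (μ a), sr (G.D a i q) * sr (G.D' a q j)
      = if i = j then 1 else 0 := by
  ext r
  rw [map_sum]
  have h1 : ∀ q ∈ range (μ a), (PowerSeries.coeff r) (sr (G.D a i q) * sr (G.D' a q j))
      = ∑ e ∈ range (r+1), G.D a i q e * G.D' a q j (r - e) :=
    fun q _ => coeff_mk_mul_mk r _ _
  rw [Finset.sum_congr rfl h1, G.D_inv a i j r ha hi hj]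
  by_cases h : i = j <;> by_cases hr : r = 0 <;>
    simp [h, hr, PowerSeries.coeff_one]

lemma DInv'_ser (a : ℕ) (ha : a < 3) {i j : ℕ} (hi : i < μ a) (hj : j < μ a) :
    ∑ q ∈ range (μ a), sr (G.D' a i q) * sr (G.D a q j)
      = if i = j then 1 else 0 := by
  ext r
  rw [map_sum]
  have h1 : ∀ q ∈ range (μ a), (PowerSeries.coeff r) (sr (G.D' a i q) * sr (G.D a q j))
      = ∑ e ∈ range (r+1), G.D' a i q e * G.D a q j (r - e) :=
    fun q _ => coeff_mk_mul_mk r _ _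
  rw [Finset.sum_congr rfl h1, G.D_inv' a i j r ha hi hj]
  by_cases h : i = j <;> by_cases hr : r = 0 <;>
    simp [h, hr, PowerSeries.coeff_one]

lemma sr_E00 (q y : ℕ) : sr (G.E 0 0 q y) = if q = y then 1 else 0 := by
  rw [show G.E 0 0 q y = fun r => if q = y ∧ r = 0 then (1:A) else 0 from
    funext fun r => G.E_diag 0 q y r]
  exact sr_delta _

lemma e_eq {i j : ℕ} (hi : i < μ 0) (hj : j < μ 1) :
    sr (G.E 0 1 i j) = ∑ p' ∈ range (μ 0), sr (G.D' 0 i p') * sr (S.t p' (μ 0 + j)) := by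
  have h1 : ∀ p' ∈ range (μ 0), sr (G.D' 0 i p') * sr (S.t p' (μ 0 + j))
      = ∑ q ∈ range (μ 0), sr (G.D' 0 i p') * sr (G.D 0 p' q) * sr (G.E 0 1 q j) := by
    intro p' hp'
    rw [blk12 S G (Finset.mem_range.mp hp') hj, Finset.mul_sum]
    exact Finset.sum_congr rfl fun q _ => (mul_assoc _ _ _).symm
  rw [Finset.sum_congr rfl h1, Finset.sum_comm]
  have h2 : ∀ q ∈ range (μ 0),
      (∑ p' ∈ range (μ 0), sr (G.D' 0 i p') * sr (G.D 0 p' q) * sr (G.E 0 1 q j))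
      = (if i = q then 1 else 0) * sr (G.E 0 1 q j) := by
    intro q hq
    rw [← Finset.sum_mul, DInv'_ser S G 0 (by norm_num) hi (Finset.mem_range.mp hq)]
  rw [Finset.sum_congr rfl h2]
  simp [Finset.sum_ite_eq, hi]

lemma t_row1 {yb y i : ℕ} (hyb : yb < 2) (hy : y < μ yb) (hi : i < μ 0) :
    sr (S.t i (off μ yb + y)) = ∑ q ∈ range (μ 0), sr (G.D 0 i q) * sr (G.E 0 yb q y) := by
  interval_cases yb
  · rw [off_zero, zero_add]
    have h1 : ∀ q ∈ range (μ 0), sr (G.D 0 i q) * sr (G.E 0 0 q y)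
        = if q = y then sr (G.D 0 i q) else 0 := by
      intro q _
      rw [sr_E00]
      by_cases h : q = y <;> simp [h]
    rw [Finset.sum_congr rfl h1, Finset.sum_ite_eq' (range (μ 0)) y]
    simp only [Finset.mem_range.mpr hy, if_true]
    exact blk11 S G hi hy
  · rw [off_one]
    exact blk12 S G hi hy


end Blocks


section SerRTT

open Finset

variable [Ring A] [Algebra ℂ A]

lemma zmod2_add_self : ∀ a : ZMod 2, a + a = 0 := by decide

lemma scomm_one_right {B : Type*} [Ring B] [Algebra ℂ B] (x : B) :
    scomm 1 x 1 = 0 := by simp [scomm]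

lemma cf_ext {P Q : PowerSeries (PowerSeries A)} (h : ∀ r s, cf r s P = cf r s Q) :
    P = Q := by
  ext s r
  exact h r s

lemma min_tele (r s : ℕ) (D : ℕ → A) :
    (∑ g ∈ range (min (r+1) s), D g) - (∑ g ∈ range (min r (s+1)), D g)
      = if r < s then D r else (if r = s then 0 else - D s) := by
  rcases lt_trichotomy r s with h | h | h
  · rw [if_pos h, min_eq_left (by omega), min_eq_left (by omega),
      Finset.sum_range_succ, add_sub_cancel_left]
  · subst h
    rw [if_neg (lt_irrefl r), if_pos rfl, min_eq_right (by omega),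
      min_eq_left (by omega), sub_self]
  · rw [if_neg (by omega), if_neg (by omega), min_eq_right (by omega),
      min_eq_right (by omega), Finset.sum_range_succ]
    abel

variable {d : ℕ} {pr : ℕ → ZMod 2} (S : RTT A d pr)

lemma serRTT (x y z w : ℕ) (hx : x < d) (hy : y < d) (hz : z < d) (hw : w < d) :
    (YY - XX) * scomm (sgn ((pr x + pr y) * (pr z + pr w))) (px (S.t x y)) (py (S.t z w))
    = sgn (pr x * pr y + pr x * pr z + pr y * pr z) •
        (XX * (YY * (px (S.t z y) * py (S.t x w) - py (S.t z y) * px (S.t x w)))) := by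
  apply cf_ext; intro r s
  rw [sub_mul, cf_sub, cf_smul]
  rcases r with _ | r <;> rcases s with _ | s
  · rw [cf_YY_mul_zero, cf_XX_mul_zero, cf_XX_mul_zero, smul_zero, sub_self]
  · rw [cf_YY_mul, cf_XX_mul_zero, cf_XX_mul_zero, smul_zero, sub_zero,
      cf_scomm_px_py, S.t_zero]
    by_cases hxy : x = y
    · subst hxy
      rw [if_pos rfl, zmod2_add_self, zero_mul, sgn_zero, scomm_one_one_left]
    · rw [if_neg hxy, scomm_zero_left]
  · rw [cf_YY_mul_zero, cf_XX_mul, cf_XX_mul, cf_YY_mul_zero, smul_zero, zero_sub,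
      cf_scomm_px_py, S.t_zero, neg_eq_zero]
    by_cases hzw : z = w
    · subst hzw
      rw [if_pos rfl, zmod2_add_self, mul_zero, sgn_zero, scomm_one_right]
    · rw [if_neg hzw, scomm_zero_right]
  · rw [cf_YY_mul, cf_XX_mul, cf_XX_mul, cf_YY_mul, cf_scomm_px_py, cf_scomm_px_py,
      cf_sub, cf_px_mul_py, cf_py_mul_px,
      S.rtt x y z w (r+1) s hx hy hz hw, S.rtt x y z w r (s+1) hx hy hz hw]
    simp only [show r + 1 + s - 1 = r + s from by omega,
      show r + (s + 1) - 1 = r + s from by omega]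
    rw [← smul_sub, min_tele]
    rcases lt_trichotomy r s with h | h | h
    · rw [if_pos h, show r + s - r = s from by omega]
    · subst h
      rw [if_neg (lt_irrefl r), if_pos rfl]
      rw [sub_self, smul_zero]
    · rw [if_neg (by omega), if_neg (by omega), show r + s - s = r from by omega]
      rw [neg_sub]

end SerRTT

section Core

open Finset

variable [Ring A] [Algebra ℂ A]

/-- ring hom sending an inner-variable series to a constant (in the outer variable) -/
abbrev pxs : PowerSeries A →+* PowerSeries (PowerSeries A) := PowerSeries.C
/-- ring hom renaming the variable to the outer variable -/
abbrev pys : PowerSeries A →+* PowerSeries (PowerSeries A) :=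
  PowerSeries.map (PowerSeries.C)

lemma px_def (c : ℕ → A) : px c = pxs (sr c) := rfl
lemma py_def (c : ℕ → A) : py c = pys (sr c) := rfl

lemma center2 (a M : PowerSeries (PowerSeries A)) :
    a * (XX * (YY * M)) = XX * (YY * (a * M)) := by
  rw [← mul_assoc a, ← XX_comm a, mul_assoc XX a, ← mul_assoc a, ← YY_comm a, mul_assoc YY]

lemma YX_comm (P : PowerSeries (PowerSeries A)) : (YY - XX) * P = P * (YY - XX) := by
  rw [sub_mul, mul_sub, XX_comm, YY_comm]

lemma scomm_expand {B : Type*} [Ring B] [Algebra ℂ B] (C X : B)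
    (hC : ∀ P, C * P = P * C) (m : ℕ) (Aq Bq : ℕ → B) (εt : ℂ) (ε1 ε2 : ℕ → ℂ)
    (hsplit : ∀ q, ε1 q * ε2 q = εt) :
    C * scomm εt X (∑ q ∈ Finset.range m, Aq q * Bq q)
    = ∑ q ∈ Finset.range m, (C * scomm (ε1 q) X (Aq q)) * Bq q
      + ∑ q ∈ Finset.range m, (ε1 q) • (Aq q * (C * scomm (ε2 q) X (Bq q))) := by
  rw [scomm_sum_right, Finset.mul_sum, ← Finset.sum_add_distrib]
  refine Finset.sum_congr rfl fun q _ => ?_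
  rw [← hsplit q, scomm_mul_right, mul_add, ← mul_assoc,
    mul_smul_comm, ← mul_assoc, hC (Aq q), mul_assoc, mul_assoc (Aq q)]

variable {d : ℕ} {pr : ℕ → ZMod 2} {μ : ℕ → ℕ} (S : RTT A d pr) (G : Gauss S.t 3 μ)

/-- left cancellation of the invertible matrix series `D_0(v)` -/
lemma canL (Z : ℕ → PowerSeries (PowerSeries A))
    (hZ : ∀ p', p' < μ 0 → ∑ q ∈ range (μ 0), py (G.D 0 p' q) * Z q = 0) :
    ∀ q, q < μ 0 → Z q = 0 := by
  intro l hl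
  have h1 : ∀ q ∈ range (μ 0), (if l = q then (1 : PowerSeries (PowerSeries A)) else 0) * Z q
      = ∑ p' ∈ range (μ 0), py (G.D' 0 l p') * (py (G.D 0 p' q) * Z q) := by
    intro q hq
    have := DInv'_ser S G 0 (by norm_num) hl (mem_range.mp hq)
    have h2 : pys (∑ q' ∈ range (μ 0), sr (G.D' 0 l q') * sr (G.D 0 q' q))
        = pys (if l = q then 1 else 0) := congrArg _ this
    rw [map_sum] at h2
    simp only [map_mul] at h2
    by_cases hlq : l = q
    · rw [if_pos hlq] at h2 ⊢
      rw [map_one] at h2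
      rw [← h2, Finset.sum_mul]
      exact Finset.sum_congr rfl fun p' _ => mul_assoc _ _ _
    · rw [if_neg hlq] at h2 ⊢
      rw [map_zero] at h2
      rw [← h2, Finset.sum_mul]
      exact Finset.sum_congr rfl fun p' _ => mul_assoc _ _ _
  have h3 : Z l = ∑ q ∈ range (μ 0), (if l = q then 1 else 0) * Z q := by
    simp [ite_mul, Finset.mem_range, hl]
  rw [h3, Finset.sum_congr rfl h1, Finset.sum_comm]
  refine Finset.sum_eq_zero fun p' hp' => ?_
  rw [← Finset.mul_sum, hZ p' (mem_range.mp hp'), mul_zero]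

/-- right cancellation of the invertible matrix series `D_1(v)` -/
lemma canRb (Z : ℕ → PowerSeries (PowerSeries A))
    (hZ : ∀ k, k < μ 1 → ∑ l ∈ range (μ 1), Z l * py (G.D 1 l k) = 0) :
    ∀ l, l < μ 1 → Z l = 0 := by
  intro m hm
  have h1 : ∀ l ∈ range (μ 1), Z l * (if l = m then (1 : PowerSeries (PowerSeries A)) else 0)
      = ∑ k ∈ range (μ 1), (Z l * py (G.D 1 l k)) * py (G.D' 1 k m) := by
    intro l hl
    have := DInv_ser S G 1 (by norm_num) (mem_range.mp hl) hm
    have h2 : pys (∑ q' ∈ range (μ 1), sr (G.D 1 l q') * sr (G.D' 1 q' m))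
        = pys (if l = m then 1 else 0) := congrArg _ this
    rw [map_sum] at h2
    simp only [map_mul] at h2
    have h4 : Z l * pys (if l = m then (1:PowerSeries A) else 0)
        = Z l * (if l = m then 1 else 0) := by
      by_cases hlm : l = m <;> simp [hlm]
    rw [← h4, ← h2, Finset.mul_sum]
    exact Finset.sum_congr rfl fun k _ => (mul_assoc _ _ _).symm
  have h3 : Z m = ∑ l ∈ range (μ 1), Z l * (if l = m then 1 else 0) := by
    simp [mul_ite, Finset.mem_range, hm]
  rw [h3, Finset.sum_congr rfl h1, Finset.sum_comm]
  refine Finset.sum_eq_zero fun k hk => ?_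
  rw [← Finset.sum_mul, hZ k (mem_range.mp hk), zero_mul]

/-- right cancellation of the invertible matrix series `D_0(u)` -/
lemma canRa (Z : ℕ → PowerSeries (PowerSeries A))
    (hZ : ∀ k, k < μ 0 → ∑ l ∈ range (μ 0), Z l * px (G.D 0 l k) = 0) :
    ∀ l, l < μ 0 → Z l = 0 := by
  intro m hm
  have h1 : ∀ l ∈ range (μ 0), Z l * (if l = m then (1 : PowerSeries (PowerSeries A)) else 0)
      = ∑ k ∈ range (μ 0), (Z l * px (G.D 0 l k)) * px (G.D' 0 k m) := by
    intro l hl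
    have := DInv_ser S G 0 (by norm_num) (mem_range.mp hl) hm
    have h2 : pxs (∑ q' ∈ range (μ 0), sr (G.D 0 l q') * sr (G.D' 0 q' m))
        = pxs (if l = m then 1 else 0) := congrArg _ this
    rw [map_sum] at h2
    simp only [map_mul] at h2
    have h4 : Z l * pxs (if l = m then (1:PowerSeries A) else 0)
        = Z l * (if l = m then 1 else 0) := by
      by_cases hlm : l = m <;> simp [hlm]
    rw [← h4, ← h2, Finset.mul_sum]
    exact Finset.sum_congr rfl fun k _ => (mul_assoc _ _ _).symm
  have h3 : Z m = ∑ l ∈ range (μ 0), Z l * (if l = m then 1 else 0) := by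
    simp [mul_ite, Finset.mem_range, hm]
  rw [h3, Finset.sum_congr rfl h1, Finset.sum_comm]
  refine Finset.sum_eq_zero fun k hk => ?_
  rw [← Finset.sum_mul, hZ k (mem_range.mp hk), zero_mul]

lemma XY_assoc (a b c : PowerSeries (PowerSeries A)) :
    (XX * (YY * (a * b))) * c = XX * (YY * (a * (b * c))) := by
  rw [mul_assoc XX, mul_assoc YY, mul_assoc a]

/-- `Ψ_{i,k}(u,v) = (uv)^{-1}( t_{i·}(u) e_{·k}(v) - t_{i,μ0+k}(u) )` -/
def Psi (i k : ℕ) : PowerSeries (PowerSeries A) :=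
  XX * (YY * ((∑ q ∈ range (μ 0), px (S.t i q) * py (G.E 0 1 q k)) - px (S.t i (μ 0 + k))))

/-- Lemma ✦ : the commutator `[t_{i,ŷ}(u), e_{q,k}(v)]`. -/
lemma star (hd : off μ 3 = d) {yb y i q k : ℕ} (hyb : yb < 2) (hy : y < μ yb)
    (hi : i < μ 0) (hq : q < μ 0) (hk : k < μ 1) :
    (YY - XX) * scomm (sgn ((pr i + pr (off μ yb + y)) * (pr q + pr (μ 0 + k))))
        (px (S.t i (off μ yb + y))) (py (G.E 0 1 q k))
      = sgn ((pr i + pr (off μ yb + y)) * pr q + pr i * pr (off μ yb + y)) •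
          (py (G.E 0 yb q y) * Psi S G i k) := by
  have hμ : μ 0 + μ 1 + μ 2 = d := by rw [← off_three μ, hd]
  set yh := off μ yb + y with hyh
  have hyd : yh < d := by
    interval_cases yb
    · rw [hyh, off_zero]; omega
    · rw [hyh, off_one]; omega
  have hid : i < d := by omega
  have hkd : μ 0 + k < d := by omega
  set Ψ := Psi S G i k with hΨ
  set Zf : ℕ → PowerSeries (PowerSeries A) := fun q' =>
    sgn ((pr i + pr yh) * pr q') •
        ((YY - XX) * scomm (sgn ((pr i + pr yh) * (pr q' + pr (μ 0 + k))))
          (px (S.t i yh)) (py (G.E 0 1 q' k)))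
      - sgn (pr i * pr yh) • (py (G.E 0 yb q' y) * Ψ) with hZf
  have e5 : py (S.t i (μ 0 + k)) = ∑ q' ∈ range (μ 0), py (S.t i q') * py (G.E 0 1 q' k) := by
    rw [py_def, blk12 S G hi hk, map_sum]
    refine Finset.sum_congr rfl fun q' hq' => ?_
    rw [map_mul, ← blk11 S G hi (Finset.mem_range.mp hq')]
    rfl
  have key : ∀ p', p' < μ 0 → ∑ q' ∈ range (μ 0), py (G.D 0 p' q') * Zf q' = 0 := by
    intro p' hp'
    have hpd : p' < d := by omega
    have ha := serRTT S i yh p' (μ 0 + k) hid hyd hpd hkd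
    have e2 : py (S.t p' (μ 0 + k))
        = ∑ q' ∈ range (μ 0), py (G.D 0 p' q') * py (G.E 0 1 q' k) := by
      rw [py_def, blk12 S G hp' hk, map_sum]
      exact Finset.sum_congr rfl fun q' _ => map_mul _ _ _
    have hsplit : ∀ q', sgn ((pr i + pr yh) * (pr p' + pr q'))
        * sgn ((pr i + pr yh) * (pr q' + pr (μ 0 + k)))
        = sgn ((pr i + pr yh) * (pr p' + pr (μ 0 + k))) := by
      intro q'
      rw [sgn_mul_sgn]
      congr 1
      exact (show ∀ a b c e : ZMod 2, a*(b+c) + a*(c+e) = a*(b+e) by decide) _ _ _ _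
    rw [e2, scomm_expand (YY - XX) (px (S.t i yh)) YX_comm (μ 0)
      (fun q' => py (G.D 0 p' q')) (fun q' => py (G.E 0 1 q' k))
      (sgn ((pr i + pr yh) * (pr p' + pr (μ 0 + k))))
      (fun q' => sgn ((pr i + pr yh) * (pr p' + pr q')))
      (fun q' => sgn ((pr i + pr yh) * (pr q' + pr (μ 0 + k)))) hsplit] at ha
    have stepA : ∀ q' ∈ range (μ 0),
        ((YY - XX) * scomm (sgn ((pr i + pr yh) * (pr p' + pr q')))
            (px (S.t i yh)) (py (G.D 0 p' q'))) * py (G.E 0 1 q' k)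
        = sgn (pr i * pr yh + pr i * pr p' + pr yh * pr p') •
            (XX * (YY * (px (S.t p' yh) * (py (S.t i q') * py (G.E 0 1 q' k)))))
          - sgn (pr i * pr yh + pr i * pr p' + pr yh * pr p') •
            (XX * (YY * (py (S.t p' yh) * (px (S.t i q') * py (G.E 0 1 q' k))))) := by
      intro q' hq'
      have hq'0 := Finset.mem_range.mp hq'
      have hD : py (G.D 0 p' q') = py (S.t p' q') := by
        rw [py_def, py_def, blk11 S G hp' hq'0]
      rw [hD, serRTT S i yh p' q' hid hyd hpd (by omega), smul_mul_assoc,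
        mul_sub YY, mul_sub XX, sub_mul, XY_assoc, XY_assoc, smul_sub]
    rw [Finset.sum_congr rfl stepA, Finset.sum_sub_distrib,
      ← Finset.smul_sum, ← Finset.smul_sum] at ha
    have collect1 : XX * (YY * (px (S.t p' yh) * py (S.t i (μ 0 + k))))
        = ∑ q' ∈ range (μ 0),
            XX * (YY * (px (S.t p' yh) * (py (S.t i q') * py (G.E 0 1 q' k)))) := by
      rw [e5, Finset.mul_sum, Finset.mul_sum, Finset.mul_sum]
    rw [mul_sub YY, mul_sub XX, smul_sub, collect1] at ha
    have main0 : ∑ q' ∈ range (μ 0),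
        sgn ((pr i + pr yh) * (pr p' + pr q')) •
          (py (G.D 0 p' q') *
            ((YY - XX) * scomm (sgn ((pr i + pr yh) * (pr q' + pr (μ 0 + k))))
              (px (S.t i yh)) (py (G.E 0 1 q' k))))
        = sgn (pr i * pr yh + pr i * pr p' + pr yh * pr p') •
            (∑ q' ∈ range (μ 0),
              XX * (YY * (py (S.t p' yh) * (px (S.t i q') * py (G.E 0 1 q' k)))))
          - sgn (pr i * pr yh + pr i * pr p' + pr yh * pr p') •
            (XX * (YY * (py (S.t p' yh) * px (S.t i (μ 0 + k))))) := by
      have h3 := eq_sub_of_add_eq' ha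
      rw [h3]; abel
    have stepB : sgn (pr i * pr yh + pr i * pr p' + pr yh * pr p') • (py (S.t p' yh) * Ψ)
        = sgn (pr i * pr yh + pr i * pr p' + pr yh * pr p') •
            (∑ q' ∈ range (μ 0),
              XX * (YY * (py (S.t p' yh) * (px (S.t i q') * py (G.E 0 1 q' k)))))
          - sgn (pr i * pr yh + pr i * pr p' + pr yh * pr p') •
            (XX * (YY * (py (S.t p' yh) * px (S.t i (μ 0 + k))))) := by
      rw [hΨ, Psi, center2, mul_sub (py (S.t p' yh)), Finset.mul_sum,
        mul_sub YY, mul_sub XX, Finset.mul_sum, Finset.mul_sum, smul_sub]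
    have main1 : ∑ q' ∈ range (μ 0),
        sgn ((pr i + pr yh) * (pr p' + pr q')) •
          (py (G.D 0 p' q') *
            ((YY - XX) * scomm (sgn ((pr i + pr yh) * (pr q' + pr (μ 0 + k))))
              (px (S.t i yh)) (py (G.E 0 1 q' k))))
        = sgn (pr i * pr yh + pr i * pr p' + pr yh * pr p') • (py (S.t p' yh) * Ψ) := by
      rw [stepB]; exact main0
    have e6 : py (S.t p' yh) = ∑ q' ∈ range (μ 0), py (G.D 0 p' q') * py (G.E 0 yb q' y) := by
      rw [hyh, py_def, t_row1 S G hyb hy hp', map_sum]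
      exact Finset.sum_congr rfl fun q' _ => map_mul _ _ _
    calc ∑ q' ∈ range (μ 0), py (G.D 0 p' q') * Zf q'
        = sgn ((pr i + pr yh) * pr p') •
            ((∑ q' ∈ range (μ 0),
              sgn ((pr i + pr yh) * (pr p' + pr q')) •
                (py (G.D 0 p' q') *
                  ((YY - XX) * scomm (sgn ((pr i + pr yh) * (pr q' + pr (μ 0 + k))))
                    (px (S.t i yh)) (py (G.E 0 1 q' k)))))
            - sgn (pr i * pr yh + pr i * pr p' + pr yh * pr p') • (py (S.t p' yh) * Ψ)) := by
          rw [smul_sub, Finset.smul_sum, hZf]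
          simp only [mul_sub]
          rw [Finset.sum_sub_distrib]
          congr 1
          · refine Finset.sum_congr rfl fun q' _ => ?_
            rw [mul_smul_comm, smul_smul, sgn_mul_sgn]
            congr 2
            exact ((show ∀ a b c : ZMod 2, a*c = a*b + a*(b+c) by decide) _ _ _)
          · rw [smul_smul, sgn_mul_sgn,
              show (pr i + pr yh) * pr p' + (pr i * pr yh + pr i * pr p' + pr yh * pr p')
                  = pr i * pr yh from
                (show ∀ a b c : ZMod 2, (a+b)*c + (a*b + a*c + b*c) = a*b by decide) _ _ _,
              e6, Finset.sum_mul, Finset.smul_sum]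
            refine Finset.sum_congr rfl fun q' _ => ?_
            rw [mul_assoc, mul_smul_comm]
      _ = 0 := by rw [main1, sub_self, smul_zero]
  have hZ0 := canL S G Zf key q hq
  rw [hZf] at hZ0
  simp only at hZ0
  have h7 := sub_eq_zero.mp hZ0
  have h8 := congrArg (fun X => sgn ((pr i + pr yh) * pr q) • X) h7
  simp only [smul_smul, sgn_mul_sgn] at h8
  rw [show (pr i + pr yh) * pr q + (pr i + pr yh) * pr q = 0 from zmod2_add_self _] at h8
  rw [sgn_zero, one_smul] at h8
  exact h8

/-- Master commutation relation: `[t_{i,ŷ}(u), G_{x,k}(v)]`. -/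
lemma master (hd : off μ 3 = d) {yb y i k x : ℕ} (hyb : yb < 2) (hy : y < μ yb)
    (hi : i < μ 0) (hk : k < μ 1) (hx : x < d) :
    (YY - XX) * scomm (sgn ((pr i + pr (off μ yb + y)) * (pr x + pr (μ 0 + k))))
        (px (S.t i (off μ yb + y))) (pys (Gser S G x k))
      = sgn (pr i * pr (off μ yb + y) + pr i * pr x + pr (off μ yb + y) * pr x) •
          ((py (S.t x (off μ yb + y))
            - ∑ q ∈ range (μ 0), py (S.t x q) * py (G.E 0 yb q y)) * Psi S G i k) := by
  have hμ : μ 0 + μ 1 + μ 2 = d := by rw [← off_three μ, hd]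
  set yh := off μ yb + y with hyh
  have hyd : yh < d := by
    interval_cases yb
    · rw [hyh, off_zero]; omega
    · rw [hyh, off_one]; omega
  have hid : i < d := by omega
  have hkd : μ 0 + k < d := by omega
  set Ψ := Psi S G i k with hΨ
  have e5 : py (S.t i (μ 0 + k)) = ∑ q' ∈ range (μ 0), py (S.t i q') * py (G.E 0 1 q' k) := by
    rw [py_def, blk12 S G hi hk, map_sum]
    refine Finset.sum_congr rfl fun q' hq' => ?_
    rw [map_mul, ← blk11 S G hi (Finset.mem_range.mp hq')]
    rfl
  have ha := serRTT S i yh x (μ 0 + k) hid hyd hx hkd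
  have eG : py (S.t x (μ 0 + k))
      = pys (Gser S G x k) + ∑ q ∈ range (μ 0), py (S.t x q) * py (G.E 0 1 q k) := by
    rw [py_def, show sr (S.t x (μ 0 + k))
        = Gser S G x k + ∑ q ∈ range (μ 0), sr (S.t x q) * sr (G.E 0 1 q k) from by
      rw [Gser, sub_add_cancel], map_add, map_sum]
    congr 1
    exact Finset.sum_congr rfl fun q _ => map_mul _ _ _
  have hsplit : ∀ q', sgn ((pr i + pr yh) * (pr x + pr q'))
      * sgn ((pr i + pr yh) * (pr q' + pr (μ 0 + k)))
      = sgn ((pr i + pr yh) * (pr x + pr (μ 0 + k))) := by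
    intro q'
    rw [sgn_mul_sgn]
    congr 1
    exact (show ∀ a b c e : ZMod 2, a*(b+c) + a*(c+e) = a*(b+e) by decide) _ _ _ _
  rw [eG, scomm_add_right, mul_add,
    scomm_expand (YY - XX) (px (S.t i yh)) YX_comm (μ 0)
      (fun q' => py (S.t x q')) (fun q' => py (G.E 0 1 q' k))
      (sgn ((pr i + pr yh) * (pr x + pr (μ 0 + k))))
      (fun q' => sgn ((pr i + pr yh) * (pr x + pr q')))
      (fun q' => sgn ((pr i + pr yh) * (pr q' + pr (μ 0 + k)))) hsplit] at ha
  have stepAx : ∀ q' ∈ range (μ 0),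
      ((YY - XX) * scomm (sgn ((pr i + pr yh) * (pr x + pr q')))
          (px (S.t i yh)) (py (S.t x q'))) * py (G.E 0 1 q' k)
      = sgn (pr i * pr yh + pr i * pr x + pr yh * pr x) •
          (XX * (YY * (px (S.t x yh) * (py (S.t i q') * py (G.E 0 1 q' k)))))
        - sgn (pr i * pr yh + pr i * pr x + pr yh * pr x) •
          (XX * (YY * (py (S.t x yh) * (px (S.t i q') * py (G.E 0 1 q' k))))) := by
    intro q' hq'
    have hq'0 := Finset.mem_range.mp hq'
    rw [serRTT S i yh x q' hid hyd hx (by omega), smul_mul_assoc,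
      mul_sub YY, mul_sub XX, sub_mul, XY_assoc, XY_assoc, smul_sub]
  have stepC : ∀ q' ∈ range (μ 0),
      sgn ((pr i + pr yh) * (pr x + pr q')) •
        (py (S.t x q') * ((YY - XX) * scomm (sgn ((pr i + pr yh) * (pr q' + pr (μ 0 + k))))
          (px (S.t i yh)) (py (G.E 0 1 q' k))))
      = sgn (pr i * pr yh + pr i * pr x + pr yh * pr x) •
          (py (S.t x q') * (py (G.E 0 yb q' y) * Ψ)) := by
    intro q' hq'
    have hq'0 := Finset.mem_range.mp hq'
    rw [star S G hd hyb hy hi hq'0 hk, ← hyh, ← hΨ, mul_smul_comm, smul_smul, sgn_mul_sgn]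
    congr 2
    exact (show ∀ a b c e : ZMod 2,
      (a+b)*(c+e) + ((a+b)*e + a*b) = a*b + a*c + b*c by decide) (pr i) (pr yh) (pr x) (pr q')
  rw [Finset.sum_congr rfl stepAx, Finset.sum_congr rfl stepC, Finset.sum_sub_distrib,
    ← Finset.smul_sum, ← Finset.smul_sum, ← Finset.smul_sum] at ha
  have collect1x : XX * (YY * (px (S.t x yh) * py (S.t i (μ 0 + k))))
      = ∑ q' ∈ range (μ 0),
          XX * (YY * (px (S.t x yh) * (py (S.t i q') * py (G.E 0 1 q' k)))) := by
    rw [e5, Finset.mul_sum, Finset.mul_sum, Finset.mul_sum]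
  rw [mul_sub YY, mul_sub XX, smul_sub, collect1x] at ha
  have hB : sgn (pr i * pr yh + pr i * pr x + pr yh * pr x) • (py (S.t x yh) * Ψ)
      = sgn (pr i * pr yh + pr i * pr x + pr yh * pr x) •
          (∑ q' ∈ range (μ 0),
            XX * (YY * (py (S.t x yh) * (px (S.t i q') * py (G.E 0 1 q' k)))))
        - sgn (pr i * pr yh + pr i * pr x + pr yh * pr x) •
          (XX * (YY * (py (S.t x yh) * px (S.t i (μ 0 + k))))) := by
    rw [hΨ, Psi, center2, mul_sub (py (S.t x yh)), Finset.mul_sum,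
      mul_sub YY, mul_sub XX, Finset.mul_sum, Finset.mul_sum, smul_sub]
  have hC : (∑ q' ∈ range (μ 0), py (S.t x q') * py (G.E 0 yb q' y)) * Ψ
      = ∑ q' ∈ range (μ 0), py (S.t x q') * (py (G.E 0 yb q' y) * Ψ) := by
    rw [Finset.sum_mul]
    exact Finset.sum_congr rfl fun q' _ => mul_assoc _ _ _
  conv_rhs => rw [sub_mul, smul_sub, hB, hC]
  have h3 := eq_sub_of_add_eq ha
  rw [h3]; abel

lemma masterB1 (hd : off μ 3 = d) {y i k x : ℕ} (hy : y < μ 0) (hi : i < μ 0)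
    (hk : k < μ 1) (hx : x < d) :
    scomm (sgn ((pr i + pr y) * (pr x + pr (μ 0 + k))))
      (px (S.t i y)) (pys (Gser S G x k)) = 0 := by
  apply YX_cancel
  have hm := master S G hd (show (0:ℕ) < 2 by norm_num) hy hi hk hx
  rw [off_zero, zero_add] at hm
  have hz : py (S.t x y) - ∑ q ∈ range (μ 0), py (S.t x q) * py (G.E 0 0 q y) = 0 := by
    rw [sub_eq_zero]
    have h1 : ∀ q ∈ range (μ 0), py (S.t x q) * py (G.E 0 0 q y)
        = if q = y then py (S.t x q) else 0 := by
      intro q _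
      rw [py_def (G.E 0 0 q y), sr_E00]
      by_cases hqy : q = y
      · simp [hqy]
      · simp [hqy]
    rw [Finset.sum_congr rfl h1, Finset.sum_ite_eq' (range (μ 0)) y]
    simp [Finset.mem_range.mpr hy]
  rw [hm, hz, zero_mul, smul_zero]

lemma pys_Gser (x j : ℕ) :
    pys (Gser S G x j) = py (S.t x (μ 0 + j))
      - ∑ q ∈ range (μ 0), py (S.t x q) * py (G.E 0 1 q j) := by
  rw [Gser, map_sub, map_sum]
  congr 1
  exact Finset.sum_congr rfl fun q _ => map_mul _ _ _

lemma masterB2 (hd : off μ 3 = d) {j i k x : ℕ} (hj : j < μ 1) (hi : i < μ 0)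
    (hk : k < μ 1) (hx : x < d) :
    (YY - XX) * scomm (sgn ((pr i + pr (μ 0 + j)) * (pr x + pr (μ 0 + k))))
        (px (S.t i (μ 0 + j))) (pys (Gser S G x k))
      = sgn (pr i * pr (μ 0 + j) + pr i * pr x + pr (μ 0 + j) * pr x) •
          (pys (Gser S G x j) * Psi S G i k) := by
  have hm := master S G hd (show (1:ℕ) < 2 by norm_num) hj hi hk hx
  rw [off_one] at hm
  rw [hm, pys_Gser]

/-- `[t_{iy}(u), b_{lk}(v)] = 0` for `y` in the first block. -/
lemma comm_b (hd : off μ 3 = d) {y i l k : ℕ} (hy : y < μ 0) (hi : i < μ 0)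
    (hl : l < μ 1) (hk : k < μ 1) :
    scomm (sgn ((pr i + pr y) * (pr (μ 0 + l) + pr (μ 0 + k))))
      (px (S.t i y)) (py (G.D 1 l k)) = 0 := by
  have hμ : μ 0 + μ 1 + μ 2 = d := by rw [← off_three μ, hd]
  have h := masterB1 S G hd hy hi hk (show μ 0 + l < d by omega)
  rwa [show pys (Gser S G (μ 0 + l) k) = py (G.D 1 l k) from by
    rw [Gser_b S G hl hk]; rfl] at h

/-- `[t_{iy}(u), f_{hl}(v)] = 0` for `y` in the first block (★A). -/
lemma starA (hd : off μ 3 = d) {y i h l : ℕ} (hy : y < μ 0) (hi : i < μ 0)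
    (hh : h < μ 2) (hl : l < μ 1) :
    scomm (sgn ((pr i + pr y) * (pr (μ 0 + μ 1 + h) + pr (μ 0 + l))))
      (px (S.t i y)) (py (G.F 2 1 h l)) = 0 := by
  have hμ : μ 0 + μ 1 + μ 2 = d := by rw [← off_three μ, hd]
  have key : ∀ k, k < μ 1 →
      ∑ l' ∈ range (μ 1),
        scomm (sgn ((pr i + pr y) * (pr (μ 0 + μ 1 + h) + pr (μ 0 + l'))))
          (px (S.t i y)) (py (G.F 2 1 h l')) * py (G.D 1 l' k) = 0 := by
    intro k hk
    have h0 := masterB1 S G hd hy hi hk (show μ 0 + μ 1 + h < d by omega)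
    rw [show pys (Gser S G (μ 0 + μ 1 + h) k)
        = ∑ l' ∈ range (μ 1), py (G.F 2 1 h l') * py (G.D 1 l' k) from by
      rw [Gser_fb S G hh hk, map_sum]
      exact Finset.sum_congr rfl fun l' _ => map_mul _ _ _] at h0
    rw [scomm_sum_right] at h0
    have h1 : ∀ l' ∈ range (μ 1),
        scomm (sgn ((pr i + pr y) * (pr (μ 0 + μ 1 + h) + pr (μ 0 + k))))
          (px (S.t i y)) (py (G.F 2 1 h l') * py (G.D 1 l' k))
        = scomm (sgn ((pr i + pr y) * (pr (μ 0 + μ 1 + h) + pr (μ 0 + l'))))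
            (px (S.t i y)) (py (G.F 2 1 h l')) * py (G.D 1 l' k) := by
      intro l' hl'
      have hsp : sgn ((pr i + pr y) * (pr (μ 0 + μ 1 + h) + pr (μ 0 + l')))
          * sgn ((pr i + pr y) * (pr (μ 0 + l') + pr (μ 0 + k)))
          = sgn ((pr i + pr y) * (pr (μ 0 + μ 1 + h) + pr (μ 0 + k))) := by
        rw [sgn_mul_sgn]
        congr 1
        exact (show ∀ a b c e : ZMod 2, a*(b+c) + a*(c+e) = a*(b+e) by decide) _ _ _ _
      rw [← hsp, scomm_mul_right,
        comm_b S G hd hy hi (Finset.mem_range.mp hl') hk, mul_zero, smul_zero, add_zero]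
    rw [Finset.sum_congr rfl h1] at h0
    exact h0
  exact canRb S G _ key l hl

/-- `[t_{i,μ0+j}(u), f_{hl}(v)] = 0` (★B). -/
lemma starB (hd : off μ 3 = d) {j i h l : ℕ} (hj : j < μ 1) (hi : i < μ 0)
    (hh : h < μ 2) (hl : l < μ 1) :
    scomm (sgn ((pr i + pr (μ 0 + j)) * (pr (μ 0 + μ 1 + h) + pr (μ 0 + l))))
      (px (S.t i (μ 0 + j))) (py (G.F 2 1 h l)) = 0 := by
  have hμ : μ 0 + μ 1 + μ 2 = d := by rw [← off_three μ, hd]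
  have key : ∀ k, k < μ 1 →
      ∑ l' ∈ range (μ 1),
        ((YY - XX) * scomm (sgn ((pr i + pr (μ 0 + j)) * (pr (μ 0 + μ 1 + h) + pr (μ 0 + l'))))
          (px (S.t i (μ 0 + j))) (py (G.F 2 1 h l'))) * py (G.D 1 l' k) = 0 := by
    intro k hk
    have h0 := masterB2 S G hd hj hi hk (show μ 0 + μ 1 + h < d by omega)
    have hGk : pys (Gser S G (μ 0 + μ 1 + h) k)
        = ∑ l' ∈ range (μ 1), py (G.F 2 1 h l') * py (G.D 1 l' k) := by
      rw [Gser_fb S G hh hk, map_sum]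
      exact Finset.sum_congr rfl fun l' _ => map_mul _ _ _
    have hGj : pys (Gser S G (μ 0 + μ 1 + h) j)
        = ∑ l' ∈ range (μ 1), py (G.F 2 1 h l') * py (G.D 1 l' j) := by
      rw [Gser_fb S G hh hj, map_sum]
      exact Finset.sum_congr rfl fun l' _ => map_mul _ _ _
    have hsp : ∀ l', sgn ((pr i + pr (μ 0 + j)) * (pr (μ 0 + μ 1 + h) + pr (μ 0 + l')))
        * sgn ((pr i + pr (μ 0 + j)) * (pr (μ 0 + l') + pr (μ 0 + k)))
        = sgn ((pr i + pr (μ 0 + j)) * (pr (μ 0 + μ 1 + h) + pr (μ 0 + k))) := by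
      intro l'
      rw [sgn_mul_sgn]
      congr 1
      exact (show ∀ a b c e : ZMod 2, a*(b+c) + a*(c+e) = a*(b+e) by decide) _ _ _ _
    rw [hGk, hGj,
      scomm_expand (YY - XX) (px (S.t i (μ 0 + j))) YX_comm (μ 1)
        (fun l' => py (G.F 2 1 h l')) (fun l' => py (G.D 1 l' k))
        (sgn ((pr i + pr (μ 0 + j)) * (pr (μ 0 + μ 1 + h) + pr (μ 0 + k))))
        (fun l' => sgn ((pr i + pr (μ 0 + j)) * (pr (μ 0 + μ 1 + h) + pr (μ 0 + l'))))
        (fun l' => sgn ((pr i + pr (μ 0 + j)) * (pr (μ 0 + l') + pr (μ 0 + k)))) hsp] at h0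
    have h2 : ∀ l' ∈ range (μ 1),
        sgn ((pr i + pr (μ 0 + j)) * (pr (μ 0 + μ 1 + h) + pr (μ 0 + l'))) •
          (py (G.F 2 1 h l') *
            ((YY - XX) * scomm (sgn ((pr i + pr (μ 0 + j)) * (pr (μ 0 + l') + pr (μ 0 + k))))
              (px (S.t i (μ 0 + j))) (py (G.D 1 l' k))))
        = sgn (pr i * pr (μ 0 + j) + pr i * pr (μ 0 + μ 1 + h)
              + pr (μ 0 + j) * pr (μ 0 + μ 1 + h)) •
            (py (G.F 2 1 h l') * (py (G.D 1 l' j) * Psi S G i k)) := by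
      intro l' hl'
      have hl'0 := Finset.mem_range.mp hl'
      have hb := masterB2 S G hd hj hi hk (show μ 0 + l' < d by omega)
      rw [show pys (Gser S G (μ 0 + l') k) = py (G.D 1 l' k) from by
          rw [Gser_b S G hl'0 hk]; rfl,
        show pys (Gser S G (μ 0 + l') j) = py (G.D 1 l' j) from by
          rw [Gser_b S G hl'0 hj]; rfl] at hb
      rw [hb, mul_smul_comm, smul_smul, sgn_mul_sgn]
      congr 2
      exact (show ∀ a b c e : ZMod 2,
        (a+b)*(c+e) + (a*b + a*e + b*e) = a*b + a*c + b*c by decide)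
        (pr i) (pr (μ 0 + j)) (pr (μ 0 + μ 1 + h)) (pr (μ 0 + l'))
    rw [Finset.sum_congr rfl h2] at h0
    have hR : sgn (pr i * pr (μ 0 + j) + pr i * pr (μ 0 + μ 1 + h)
            + pr (μ 0 + j) * pr (μ 0 + μ 1 + h)) •
          ((∑ l' ∈ range (μ 1), py (G.F 2 1 h l') * py (G.D 1 l' j)) * Psi S G i k)
        = ∑ l' ∈ range (μ 1),
            sgn (pr i * pr (μ 0 + j) + pr i * pr (μ 0 + μ 1 + h)
              + pr (μ 0 + j) * pr (μ 0 + μ 1 + h)) •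
              (py (G.F 2 1 h l') * (py (G.D 1 l' j) * Psi S G i k)) := by
      rw [Finset.sum_mul, Finset.smul_sum]
      exact Finset.sum_congr rfl fun l' _ => by rw [mul_assoc]
    rw [hR] at h0
    rwa [add_eq_right] at h0
  have h5 := canRb S G _ key l hl
  exact YX_cancel h5

/-- `[a'_{qp}(u), f_{hl}(v)] = 0` (★A'). -/
lemma starA' (hd : off μ 3 = d) {q p h l : ℕ} (hq : q < μ 0) (hp : p < μ 0)
    (hh : h < μ 2) (hl : l < μ 1) :
    scomm (sgn ((pr q + pr p) * (pr (μ 0 + μ 1 + h) + pr (μ 0 + l))))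
      (px (G.D' 0 q p)) (py (G.F 2 1 h l)) = 0 := by
  have key : ∀ p', p' < μ 0 →
      ∑ p'' ∈ range (μ 0),
        (sgn (pr p'' * (pr (μ 0 + μ 1 + h) + pr (μ 0 + l))) •
          scomm (sgn ((pr q + pr p'') * (pr (μ 0 + μ 1 + h) + pr (μ 0 + l))))
            (px (G.D' 0 q p'')) (py (G.F 2 1 h l))) * px (G.D 0 p'' p') = 0 := by
    intro p' hp'
    have S0 : scomm (sgn ((pr q + pr p') * (pr (μ 0 + μ 1 + h) + pr (μ 0 + l))))
        (pxs (if q = p' then (1:PowerSeries A) else 0)) (py (G.F 2 1 h l)) = 0 := by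
      by_cases hqp : q = p'
      · subst hqp
        rw [if_pos rfl, map_one, zmod2_add_self, zero_mul, sgn_zero]
        exact scomm_one_one_left _
      · rw [if_neg hqp, map_zero, scomm_zero_left]
    rw [← DInv'_ser S G 0 (by norm_num) hq hp', map_sum] at S0
    have e1 : ∀ p'' ∈ range (μ 0), pxs (sr (G.D' 0 q p'') * sr (G.D 0 p'' p'))
        = px (G.D' 0 q p'') * px (G.D 0 p'' p') := fun _ _ => map_mul _ _ _
    rw [Finset.sum_congr rfl e1, scomm_sum_left] at S0
    have e2 : ∀ p'' ∈ range (μ 0),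
        scomm (sgn ((pr q + pr p') * (pr (μ 0 + μ 1 + h) + pr (μ 0 + l))))
          (px (G.D' 0 q p'') * px (G.D 0 p'' p')) (py (G.F 2 1 h l))
        = sgn (pr p' * (pr (μ 0 + μ 1 + h) + pr (μ 0 + l))) •
            ((sgn (pr p'' * (pr (μ 0 + μ 1 + h) + pr (μ 0 + l))) •
              scomm (sgn ((pr q + pr p'') * (pr (μ 0 + μ 1 + h) + pr (μ 0 + l))))
                (px (G.D' 0 q p'')) (py (G.F 2 1 h l))) * px (G.D 0 p'' p')) := by
      intro p'' hp''
      have hp''0 := Finset.mem_range.mp hp''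
      have hsp : sgn ((pr q + pr p'') * (pr (μ 0 + μ 1 + h) + pr (μ 0 + l)))
          * sgn ((pr p'' + pr p') * (pr (μ 0 + μ 1 + h) + pr (μ 0 + l)))
          = sgn ((pr q + pr p') * (pr (μ 0 + μ 1 + h) + pr (μ 0 + l))) := by
        rw [sgn_mul_sgn]; congr 1
        exact (show ∀ w b c e : ZMod 2, (b+c)*w + (c+e)*w = (b+e)*w by decide) _ _ _ _
      rw [← hsp, scomm_mul_left]
      have hz : scomm (sgn ((pr p'' + pr p') * (pr (μ 0 + μ 1 + h) + pr (μ 0 + l))))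
          (px (G.D 0 p'' p')) (py (G.F 2 1 h l)) = 0 := by
        rw [show px (G.D 0 p'' p') = px (S.t p'' p') from by
          rw [px_def, px_def, blk11 S G hp''0 hp']]
        exact starA S G hd hp' hp''0 hh hl
      rw [hz, mul_zero, zero_add, smul_mul_assoc, smul_smul, sgn_mul_sgn]
      congr 1
      exact congrArg sgn
        ((show ∀ w b c : ZMod 2, (b+c)*w = c*w + b*w by decide) _ _ _)
    rw [Finset.sum_congr rfl e2, ← Finset.smul_sum] at S0
    exact sgn_smul_cancel _ S0
  have h6 := canRa S G _ key p hp
  exact sgn_smul_cancel _ h6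

/-- the series form of the theorem: `[e_{ij}(u), f_{hk}(v)] = 0`. -/
lemma finalSeries (hd : off μ 3 = d) {i j h k : ℕ} (hi : i < μ 0) (hj : j < μ 1)
    (hh : h < μ 2) (hk : k < μ 1) :
    scomm (sgn ((pr i + pr (μ 0 + j)) * (pr (μ 0 + μ 1 + h) + pr (μ 0 + k))))
      (px (G.E 0 1 i j)) (py (G.F 2 1 h k)) = 0 := by
  have he : px (G.E 0 1 i j)
      = ∑ p' ∈ range (μ 0), px (G.D' 0 i p') * px (S.t p' (μ 0 + j)) := by
    rw [px_def, e_eq S G hi hj, map_sum]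
    exact Finset.sum_congr rfl fun p' _ => map_mul _ _ _
  rw [he, scomm_sum_left]
  refine Finset.sum_eq_zero fun p' hp' => ?_
  have hp'0 := Finset.mem_range.mp hp'
  have hsp : sgn ((pr i + pr p') * (pr (μ 0 + μ 1 + h) + pr (μ 0 + k)))
      * sgn ((pr p' + pr (μ 0 + j)) * (pr (μ 0 + μ 1 + h) + pr (μ 0 + k)))
      = sgn ((pr i + pr (μ 0 + j)) * (pr (μ 0 + μ 1 + h) + pr (μ 0 + k))) := by
    rw [sgn_mul_sgn]; congr 1
    exact (show ∀ w b c e : ZMod 2, (b+c)*w + (c+e)*w = (b+e)*w by decide) _ _ _ _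
  rw [← hsp, scomm_mul_left, starB S G hd hj hp'0 hh hk, mul_zero, zero_add,
    starA' S G hd hi hp'0 hh hk, zero_mul, smul_zero]

end Core

/-- For `μ = (μ 0, μ 1, μ 2)`, the Gauss blocks satisfy
`[E_{1;i,j}(u), F_{2;h,k}(v)] = 0`, stated coefficientwise: the supercommutator of
`E_{1;i,j}^{(r)}` and `F_{2;h,k}^{(s)}` vanishes for all `r, s`. -/
theorem statement9 [Ring A] [Algebra ℂ A] {d : ℕ} {p : ℕ → ZMod 2} {μ : ℕ → ℕ}
    (S : RTT A d p) (G : Gauss S.t 3 μ) (hd : off μ 3 = d) :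
    ∀ i j h k r s : ℕ, i < μ 0 → j < μ 1 → h < μ 2 → k < μ 1 →
      scomm (sgn ((p i + p (μ 0 + j)) * (p (μ 0 + μ 1 + h) + p (μ 0 + k))))
        (G.E 0 1 i j r) (G.F 2 1 h k s) = 0 := by
  intro i j h k r s hi hj hh hk
  have hser := finalSeries S G hd hi hj hh hk
  have hc := congrArg (cf r s) hser
  rwa [cf_scomm_px_py, cf_zero] at hc

end SuperYangian
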